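/- Let e₁, e₂ : ℕ → ℚ be bijections. Then the linearly ordered sets C_{e₁} and C_{e₂} are order-isomorphic if and only if the bijection e₂ ∘ e₁⁻¹ : ℚ → ℚ is an order-automorphism of ℚ (equivalently, is strictly increasing). Moreover, any order-isomorphism φ : C_{e₁} → C_{e₂} satisfies φ(n, i) = (n, i) for all n ∈ ℕ and 0 ≤ i ≤ n. -/

import Mathlib

/-- The underlying set of `C_e`: pairs `(n, i)` with `i ≤ n`. -/
def CElt : Type := {p : ℕ × ℕ // p.2 ≤ p.1}

/-- The linear order on `C_e` determined by an enumeration `e : ℕ → ℚ`: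
`(m, i) ≤ (n, j)` iff `e m < e n`, or `m = n` and `i ≤ j`. -/
def Cle (e : ℕ → ℚ) (p q : CElt) : Prop :=
  e p.val.1 < e q.val.1 ∨ (p.val.1 = q.val.1 ∧ p.val.2 ≤ q.val.2)

/-- The order-theoretic "cover" relation for `Cle e`. -/
def NRel (e : ℕ → ℚ) (x y : CElt) : Prop :=
  Cle e x y ∧ x ≠ y ∧ ∀ z, Cle e x z → Cle e z y → z = x ∨ z = y

lemma celt_ext {x y : CElt} (h : x.val = y.val) : x = y := Subtype.ext h

lemma nrel_iff (e : ℕ → ℚ) (he : Function.Surjective e) (x y : CElt) :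
    NRel e x y ↔ x.val.1 = y.val.1 ∧ y.val.2 = x.val.2 + 1 := by
  obtain ⟨⟨n, i⟩, hx⟩ := x
  obtain ⟨⟨m, j⟩, hy⟩ := y
  simp only [NRel, Cle]
  constructor
  · rintro ⟨hle, hne, hmax⟩
    rcases hle with h | ⟨h1, h2⟩
    · exfalso
      obtain ⟨q, hq1, hq2⟩ := exists_between h
      obtain ⟨k, rfl⟩ := he q
      rcases hmax ⟨(k, 0), Nat.zero_le _⟩ (Or.inl hq1) (Or.inl hq2) with h' | h'
      · have : k = n := by simpa using congrArg (fun z => z.val.1) h'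
        subst this; exact lt_irrefl _ hq1
      · have : k = m := by simpa using congrArg (fun z => z.val.1) h'
        subst this; exact lt_irrefl _ hq2
    · subst h1
      refine ⟨rfl, ?_⟩
      have hne2 : i ≠ j := fun h => hne (by subst h; rfl)
      by_contra hj
      have hij : i + 1 < j := by omega
      have h1n : i + 1 ≤ n := by omega
      rcases hmax ⟨(n, i + 1), h1n⟩ (Or.inr ⟨rfl, show i ≤ i + 1 by omega⟩)
          (Or.inr ⟨rfl, show i + 1 ≤ j by omega⟩) with h' | h'
      · have : i + 1 = i := by simpa using congrArg (fun z => z.val.2) h'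
        omega
      · have : i + 1 = j := by simpa using congrArg (fun z => z.val.2) h'
        omega
  · rintro ⟨rfl, rfl⟩
    refine ⟨Or.inr ⟨rfl, by omega⟩, ?_, ?_⟩
    · intro h
      have : i = i + 1 := by simpa using congrArg (fun z => z.val.2) h
      omega
    · rintro ⟨⟨a, b⟩, hz⟩ (h | ⟨h1, h2⟩) (h' | ⟨h1', h2'⟩)
      · exact absurd (h.trans h') (lt_irrefl _)
      · subst h1'; exact absurd h (lt_irrefl _)
      · subst h1; exact absurd h' (lt_irrefl _)
      · subst h1
        have hb1 : i ≤ b := h2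
        have hb2 : b ≤ i + 1 := h2'
        have : b = i ∨ b = i + 1 := by omega
        rcases this with rfl | rfl
        · left; rfl
        · right; rfl

lemma nrel_map {e₁ e₂ : ℕ → ℚ} (φ : Cle e₁ ≃r Cle e₂) {x y : CElt}
    (h : NRel e₁ x y) : NRel e₂ (φ x) (φ y) := by
  obtain ⟨hle, hne, hmax⟩ := h
  refine ⟨φ.map_rel_iff.mpr hle, fun h => hne (φ.injective h), fun z hz1 hz2 => ?_⟩
  have h1 : Cle e₁ x (φ.symm z) := by
    rw [← φ.map_rel_iff, φ.apply_symm_apply]; exact hz1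
  have h2 : Cle e₁ (φ.symm z) y := by
    rw [← φ.map_rel_iff, φ.apply_symm_apply]; exact hz2
  rcases hmax (φ.symm z) h1 h2 with h' | h'
  · left; rw [← φ.apply_symm_apply z, h']
  · right; rw [← φ.apply_symm_apply z, h']

lemma phi_fix {e₁ e₂ : ℕ → ℚ} (h₁ : Function.Bijective e₁)
    (h₂ : Function.Bijective e₂) (φ : Cle e₁ ≃r Cle e₂) (p : CElt) :
    (φ p).val = p.val := by
  -- the value of φ on ⟨(n,i),h⟩
  have key : ∀ n i (h : i ≤ n),
      (φ ⟨(n, i), h⟩).val.2 = i ∧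
      (φ ⟨(n, i), h⟩).val.1 = (φ ⟨(n, 0), Nat.zero_le n⟩).val.1 := by
    intro n i
    induction i with
    | zero =>
      intro h
      refine ⟨?_, rfl⟩
      by_contra h0
      set x : CElt := ⟨(n, 0), Nat.zero_le n⟩ with hxdef
      obtain ⟨j, hj⟩ : ∃ j, (φ x).val.2 = j + 1 := by
        cases hc : (φ x).val.2 with
        | zero => exact absurd hc h0
        | succ k => exact ⟨k, rfl⟩
      have hjle : j ≤ (φ x).val.1 := le_trans (by omega) (φ x).property
      set w : CElt := ⟨((φ x).val.1, j), hjle⟩ with hwdef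
      have hw : NRel e₂ w (φ x) := by
        rw [nrel_iff e₂ h₂.2]; exact ⟨rfl, hj⟩
      have hw' : NRel e₁ (φ.symm w) x := by
        have := nrel_map φ.symm hw
        rwa [φ.symm_apply_apply] at this
      rw [nrel_iff e₁ h₁.2] at hw'
      have : (0 : ℕ) = (φ.symm w).val.2 + 1 := hw'.2
      omega
    | succ k ih =>
      intro h
      have hk : k ≤ n := by omega
      obtain ⟨ih1, ih2⟩ := ih hk
      have hn : NRel e₁ ⟨(n, k), hk⟩ ⟨(n, k + 1), h⟩ := by
        exact (nrel_iff e₁ h₁.2 _ _).mpr ⟨rfl, rfl⟩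
      have := nrel_map φ hn
      rw [nrel_iff e₂ h₂.2] at this
      exact ⟨by rw [this.2, ih1], by rw [← this.1, ih2]⟩
  -- the block index is also fixed
  have key1 : ∀ n, (φ ⟨(n, 0), Nat.zero_le n⟩).val.1 = n := by
    intro n
    set m := (φ ⟨(n, 0), Nat.zero_le n⟩).val.1 with hm
    obtain ⟨ht2, ht1⟩ := key n n le_rfl
    have hnm : n ≤ m := by
      have := (φ ⟨(n, n), le_rfl⟩).property
      rw [ht2, ht1] at this
      exact this
    by_contra hne
    have hlt : n < m := by omega
    set y : CElt := ⟨(m, n + 1), by omega⟩ with hydef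
    have hy : NRel e₂ (φ ⟨(n, n), le_rfl⟩) y := by
      rw [nrel_iff e₂ h₂.2]
      exact ⟨by rw [ht1], by rw [ht2]⟩
    have hy' : NRel e₁ ⟨(n, n), le_rfl⟩ (φ.symm y) := by
      have := nrel_map φ.symm hy
      exact cast (congrArg (fun z => NRel e₁ z (φ.symm y)) (φ.symm_apply_apply _)) this
    have hy' := (nrel_iff e₁ h₁.2 _ _).mp hy'
    have hle := (φ.symm y).property
    have h1 : ((n, n) : ℕ × ℕ).1 = (φ.symm y).val.1 := hy'.1
    have h2 : (φ.symm y).val.2 = ((n, n) : ℕ × ℕ).2 + 1 := hy'.2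
    simp only at h1 h2
    omega
  obtain ⟨⟨n, i⟩, hp⟩ := p
  obtain ⟨k1, k2⟩ := key n i hp
  have := key1 n
  exact Prod.ext_iff.mpr ⟨by rw [k2, this], k1⟩

theorem stmt_5 (e₁ e₂ : ℕ → ℚ) (h₁ : Function.Bijective e₁)
    (h₂ : Function.Bijective e₂) :
    (Nonempty (Cle e₁ ≃r Cle e₂) ↔ StrictMono (e₂ ∘ Function.invFun e₁)) ∧
    (∀ φ : Cle e₁ ≃r Cle e₂, ∀ p : CElt, (φ p).val = p.val) := by
  refine ⟨⟨?_, ?_⟩, fun φ p => phi_fix h₁ h₂ φ p⟩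
  · rintro ⟨φ⟩ q q' hlt
    have hfix : ∀ p : CElt, φ p = p := fun p => celt_ext (phi_fix h₁ h₂ φ p)
    set a := Function.invFun e₁ q with ha
    set b := Function.invFun e₁ q' with hb
    have hea : e₁ a = q := Function.rightInverse_invFun h₁.2 q
    have heb : e₁ b = q' := Function.rightInverse_invFun h₁.2 q'
    have hab : e₁ a < e₁ b := by rw [hea, heb]; exact hlt
    set x : CElt := ⟨(a, 0), Nat.zero_le a⟩ with hx
    set y : CElt := ⟨(b, 0), Nat.zero_le b⟩ with hy
    have hc : Cle e₂ (φ x) (φ y) := φ.map_rel_iff.mpr (Or.inl hab)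
    rw [hfix x, hfix y] at hc
    rcases hc with h | ⟨h1, _⟩
    · exact h
    · simp only [hx, hy] at h1
      exfalso
      rw [show a = b from h1] at hab
      exact lt_irrefl _ hab
  · intro hm
    set f := e₂ ∘ Function.invFun e₁ with hf
    have keyf : ∀ k, f (e₁ k) = e₂ k := by
      intro k
      simp only [hf, Function.comp_apply, Function.leftInverse_invFun h₁.1 k]
    have keyiff : ∀ a b : ℕ, e₁ a < e₁ b ↔ e₂ a < e₂ b := by
      intro a b
      rw [← keyf a, ← keyf b]
      exact (hm.lt_iff_lt).symm
    exact ⟨⟨Equiv.refl CElt, by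
      intro a b
      simp only [Equiv.refl_apply, Cle]
      exact or_congr (keyiff a.val.1 b.val.1).symm Iff.rfl⟩⟩
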